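/- Let f be a real polynomial of degree n with only real roots, let x_{n-1}, x_{n-2} be roots of f^{(n-1)}, f^{(n-2)} respectively, let r be the maximal multiplicity of a root of f, and let m ∈ {r, …, n−2}. Define D^{(m)} = max over roots ξ of f^{(m)} of |ξ − x_{n-1}|. Then D^{(m)} ≥ sqrt(n − m − 1) · |x_{n-1} − x_{n-2}|. Moreover, if x_{n-1} is itself a root of f^{(m)}, then D^{(m)} ≥ sqrt(n − m) · |x_{n-1} − x_{n-2}|. -/

import Mathlib

open Polynomial

lemma aux_esymm_one (s : Multiset ℝ) : s.esymm 1 = s.sum := by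
  rw [Multiset.esymm, Multiset.powersetCard_one, Multiset.map_map]
  simp

lemma aux_esymm_cons (s : Multiset ℝ) (a : ℝ) : (a ::ₘ s).esymm 2 = s.esymm 2 + a * s.sum := by
  rw [Multiset.esymm, show (2:ℕ) = 1+1 from rfl, Multiset.powersetCard_cons, Multiset.map_add,
    Multiset.sum_add, Multiset.map_map]
  congr 1
  rw [Multiset.powersetCard_one, Multiset.map_map]
  simp only [Function.comp, Multiset.prod_cons, Multiset.prod_singleton]
  simpa using Multiset.sum_map_mul_left (a := a) (f := fun x : ℝ => x) (s := s)

lemma aux_esymm_two (s : Multiset ℝ) :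
    2 * s.esymm 2 = s.sum ^ 2 - (s.map (fun x => x ^ 2)).sum := by
  induction s using Multiset.induction with
  | empty => simp [Multiset.esymm, Multiset.powersetCard_zero_right 1]
  | cons a s ih => rw [aux_esymm_cons]; simp only [Multiset.map_cons, Multiset.sum_cons,
      Multiset.sum_cons]; ring_nf; ring_nf at ih; linarith

lemma aux_pair (x y : ℝ) : (x ::ₘ {y} : Multiset ℝ).esymm 2 = x * y := by
  rw [aux_esymm_cons]
  have h0 : ({y} : Multiset ℝ).esymm 2 = 0 := by
    have : ({y} : Multiset ℝ) = y ::ₘ 0 := rfl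
    rw [this, aux_esymm_cons]; simp [Multiset.esymm, Multiset.powersetCard_zero_right 1]
  simp [h0]

lemma aux_sumsq (s : Multiset ℝ) (c : ℝ) :
    (s.map (fun x => (x - c)^2)).sum
      = (s.map (fun x => x^2)).sum - 2*c*s.sum + (Multiset.card s : ℝ)*c^2 := by
  induction s using Multiset.induction with
  | empty => simp
  | cons a s ih => simp [ih]; ring

lemma aux_key (f : ℝ[X]) (n : ℕ) (hdeg : f.natDegree = n) (hreal : f.roots.card = n) :
    ∀ k, k ≤ n → (derivative^[k] f).natDegree = n - k ∧
      Multiset.card (derivative^[k] f).roots = n - k := by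
  intro k
  induction k with
  | zero => intro _; simpa using ⟨hdeg, hreal⟩
  | succ k ih =>
    intro hk
    obtain ⟨hdk, hck⟩ := ih (by omega)
    have hpos : 0 < (derivative^[k] f).natDegree := by omega
    have hdeg' : (derivative^[k+1] f).degree = ((n - (k+1) : ℕ) : WithBot ℕ) := by
      rw [Function.iterate_succ_apply', degree_derivative_eq _ hpos]
      congr 1
      omega
    have hnd : (derivative^[k+1] f).natDegree = n - (k+1) := natDegree_eq_of_degree_eq_some hdeg'
    refine ⟨hnd, le_antisymm (hnd ▸ (derivative^[k+1] f).card_roots') ?_⟩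
    have h := (derivative^[k] f).card_roots_le_derivative
    rw [show derivative ((derivative)^[k] f) = derivative^[k+1] f from
      (Function.iterate_succ_apply' _ _ _).symm] at h
    omega

theorem stmt_14 (n r m : ℕ) (hn : 2 ≤ n) (f : ℝ[X]) (hdeg : f.natDegree = n)
    (hreal : f.roots.card = n)
    (hr : ∀ x ∈ f.roots.toFinset, f.rootMultiplicity x ≤ r)
    (hrex : ∃ x ∈ f.roots.toFinset, f.rootMultiplicity x = r)
    (hm1 : r ≤ m) (hm2 : m ≤ n - 2)
    (xn1 xn2 : ℝ)
    (hxn1 : (derivative^[n - 1] f).eval xn1 = 0)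
    (hxn2 : (derivative^[n - 2] f).eval xn2 = 0)
    (Dm : ℝ)
    (hDm : ∀ ξ : ℝ, (derivative^[m] f).eval ξ = 0 → |ξ - xn1| ≤ Dm)
    (hDmex : ∃ ξ : ℝ, (derivative^[m] f).eval ξ = 0 ∧ |ξ - xn1| = Dm) :
    Real.sqrt ((n : ℝ) - m - 1) * |xn1 - xn2| ≤ Dm ∧
      ((derivative^[m] f).eval xn1 = 0 →
        Real.sqrt ((n : ℝ) - m) * |xn1 - xn2| ≤ Dm) := by
  have hmn : m + 2 ≤ n := by omega
  set j := n - m - 2 with hj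
  clear_value j
  set p := derivative^[m] f with hp
  -- degrees and root counts
  obtain ⟨hpdeg0, hpcard0⟩ := aux_key f n hdeg hreal m (by omega)
  obtain ⟨hqdeg0, hqcard0⟩ := aux_key f n hdeg hreal (n-2) (by omega)
  obtain ⟨hldeg0, -⟩ := aux_key f n hdeg hreal (n-1) (by omega)
  have hpdeg : p.natDegree = j + 2 := by rw [hp, hpdeg0]; omega
  have hpcard : Multiset.card p.roots = j + 2 := by rw [hp, hpcard0]; omega
  have hq_eq : derivative^[n-2] f = derivative^[j] p := by
    rw [hp, ← Function.iterate_add_apply]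
    congr 1
    omega
  have hl_eq : derivative^[n-1] f = derivative^[j+1] p := by
    rw [hp, ← Function.iterate_add_apply]
    congr 1
    omega
  rw [hq_eq] at hqdeg0 hqcard0 hxn2
  rw [hl_eq] at hldeg0 hxn1
  have hqdeg : (derivative^[j] p).natDegree = 2 := by rw [hqdeg0]; omega
  have hqcard : Multiset.card (derivative^[j] p).roots = 2 := by rw [hqcard0]; omega
  have hldeg : (derivative^[j+1] p).natDegree = 1 := by rw [hldeg0]; omega
  -- nonvanishing
  have hp0 : p ≠ 0 := by intro h; rw [h, natDegree_zero] at hpdeg; omega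
  have hq0' : derivative^[j] p ≠ 0 := by intro h; rw [h, natDegree_zero] at hqdeg; omega
  -- coefficients
  have hLne : p.coeff (j+2) ≠ 0 := by
    have h := leadingCoeff_ne_zero.mpr hp0
    rwa [leadingCoeff, hpdeg] at h
  set L := p.coeff (j+2) with hLdef
  set A := p.coeff j with hAdef
  set B := p.coeff (j+1) with hBdef
  set c2 := (j+2).descFactorial j with hc2
  clear_value c2
  have hq0c : (derivative^[j] p).coeff 0 = (j.factorial : ℝ) * A := by
    rw [coeff_iterate_derivative, zero_add, Nat.descFactorial_self, nsmul_eq_mul]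
  have hq1c : (derivative^[j] p).coeff 1 = ((j+1).factorial : ℝ) * B := by
    rw [coeff_iterate_derivative, show 1 + j = j + 1 from by omega, nsmul_eq_mul]
    congr 2
    have h := Nat.factorial_mul_descFactorial (show j ≤ j+1 by omega)
    rw [show j + 1 - j = 1 from by omega] at h
    simpa [Nat.factorial] using h
  have hc2fac : 2 * c2 = (j+2).factorial := by
    have h := Nat.factorial_mul_descFactorial (show j ≤ j+2 by omega)
    rw [show j + 2 - j = 2 from by omega] at h
    simpa [Nat.factorial, hc2] using h
  have hq2c : (derivative^[j] p).coeff 2 = (c2 : ℝ) * L := by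
    rw [coeff_iterate_derivative, show 2 + j = j + 2 from by omega, nsmul_eq_mul, hc2]
  have hl0c : (derivative^[j+1] p).coeff 0 = ((j+1).factorial : ℝ) * B := by
    rw [coeff_iterate_derivative, zero_add, Nat.descFactorial_self, nsmul_eq_mul]
  have hl1c : (derivative^[j+1] p).coeff 1 = ((j+2).factorial : ℝ) * L := by
    rw [coeff_iterate_derivative, show 1 + (j+1) = j + 2 from by omega, nsmul_eq_mul]
    congr 2
    have h := Nat.factorial_mul_descFactorial (show j + 1 ≤ j+2 by omega)
    rw [show j + 2 - (j+1) = 1 from by omega] at h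
    simpa [Nat.factorial] using h
  -- evaluation of the (n-1)st derivative at xn1
  have hlev : ((j+1).factorial : ℝ) * B + ((j+2).factorial : ℝ) * L * xn1 = 0 := by
    rw [eval_eq_sum_range, hldeg] at hxn1
    simp only [Finset.sum_range_succ, Finset.sum_range_zero, pow_zero, mul_one, pow_one,
      zero_add] at hxn1
    rw [hl0c, hl1c] at hxn1
    linarith
  -- Vieta for p
  have hproots : Multiset.card p.roots = p.natDegree := by rw [hpdeg, hpcard]
  have hv1p : B = -(L * p.roots.sum) := by
    have h := coeff_eq_esymm_roots_of_card hproots (show j+1 ≤ p.natDegree by omega)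
    rw [hpdeg, show j + 2 - (j+1) = 1 from by omega, aux_esymm_one, leadingCoeff, hpdeg] at h
    rw [hBdef, h]; ring
  have hv2p : A = L * p.roots.esymm 2 := by
    have h := coeff_eq_esymm_roots_of_card hproots (show j ≤ p.natDegree by omega)
    rw [hpdeg, show j + 2 - j = 2 from by omega, leadingCoeff, hpdeg] at h
    rw [hAdef, h]; ring
  -- Vieta for q := derivative^[j] p
  have hqroots : Multiset.card (derivative^[j] p).roots = (derivative^[j] p).natDegree := by
    rw [hqdeg, hqcard]
  have hv1q : (derivative^[j] p).coeff 1
      = -((derivative^[j] p).coeff 2 * (derivative^[j] p).roots.sum) := by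
    have h := coeff_eq_esymm_roots_of_card hqroots (show 1 ≤ (derivative^[j] p).natDegree by omega)
    rw [hqdeg, show 2 - 1 = 1 from by omega, aux_esymm_one, leadingCoeff, hqdeg] at h
    rw [h]; ring
  have hv2q : (derivative^[j] p).coeff 0
      = (derivative^[j] p).coeff 2 * (derivative^[j] p).roots.esymm 2 := by
    have h := coeff_eq_esymm_roots_of_card hqroots (show 0 ≤ (derivative^[j] p).natDegree by omega)
    rw [hqdeg, show 2 - 0 = 2 from by omega, leadingCoeff, hqdeg] at h
    rw [h]; ring
  -- cast facts
  have hFne : ((j+1).factorial : ℝ) ≠ 0 := Nat.cast_ne_zero.mpr (Nat.factorial_ne_zero _)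
  have hjne : ((j).factorial : ℝ) ≠ 0 := Nat.cast_ne_zero.mpr (Nat.factorial_ne_zero _)
  have hc2ne : (c2 : ℝ) ≠ 0 := by
    have : c2 ≠ 0 := by
      rw [hc2]
      intro h
      have := Nat.descFactorial_eq_zero_iff_lt.mp h
      omega
    exact Nat.cast_ne_zero.mpr this
  have hcast2 : ((j+2).factorial : ℝ) = ((j:ℝ)+2) * ((j+1).factorial : ℝ) := by
    rw [show j + 2 = (j+1) + 1 from rfl, Nat.factorial_succ]
    push_cast; ring
  have hcast3 : 2*(c2:ℝ) = ((j:ℝ)+2)*((j:ℝ)+1)*(j.factorial:ℝ) := by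
    have : ((2 * c2 : ℕ) : ℝ) = (((j+2).factorial : ℕ) : ℝ) := by rw [hc2fac]
    push_cast at this
    rw [this, show j + 2 = (j+1) + 1 from rfl, Nat.factorial_succ, Nat.factorial_succ]
    push_cast; ring
  have hcast4 : 2*(c2:ℝ) = ((j:ℝ)+2)*((j+1).factorial:ℝ) := by
    rw [hcast3, Nat.factorial_succ]; push_cast; ring
  -- sum of roots of p
  have hS : p.roots.sum = ((j:ℝ)+2) * xn1 := by
    apply mul_left_cancel₀ (mul_ne_zero hFne hLne)
    linear_combination ((j+1).factorial:ℝ) * hv1p - hlev + (L*xn1) * hcast2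
  -- the two roots of the (n-2)nd derivative
  have hx2mem : xn2 ∈ (derivative^[j] p).roots := by
    rw [mem_roots']
    exact ⟨hq0', hxn2⟩
  obtain ⟨t, ht⟩ := Multiset.exists_cons_of_mem hx2mem
  have htcard : Multiset.card t = 1 := by
    have := hqcard
    rw [ht] at this
    simpa using this
  obtain ⟨y, hy⟩ := Multiset.card_eq_one.mp htcard
  rw [hy] at ht
  have hBv : B = -(L * (((j:ℝ)+2) * xn1)) := by rw [hv1p, hS]
  have hqsum : (derivative^[j] p).roots.sum = xn2 + y := by rw [ht]; simp
  have hsum2 : xn2 + y = 2 * xn1 := by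
    apply mul_left_cancel₀ (mul_ne_zero hc2ne hLne)
    rw [hqsum] at hv1q
    linear_combination hv1q - hq1c - (xn2+y) * hq2c - ((j+1).factorial:ℝ) * hBv - (L*xn1) * hcast4
  have hqes2 : (derivative^[j] p).roots.esymm 2 = xn2 * y := by rw [ht, aux_pair]
  -- elementary symmetric function of p's roots
  have hE : 2 * p.roots.esymm 2 = ((j:ℝ)+2)*((j:ℝ)+1)*(xn2*y) := by
    apply mul_left_cancel₀ (mul_ne_zero hjne hLne)
    rw [hqes2] at hv2q
    linear_combination (-2*(j.factorial:ℝ)) * hv2p - 2 * hq0c + 2 * hv2q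
      + (2*(xn2*y)) * hq2c + (L*(xn2*y)) * hcast3
  -- the sum of squared deviations
  set Tm := (p.roots.map (fun x => (x - xn1)^2)).sum with hTmdef
  clear_value Tm
  have hstep : Tm = p.roots.sum^2 - 2 * p.roots.esymm 2 - 2*xn1*p.roots.sum
      + ((j:ℝ)+2)*xn1^2 := by
    rw [hTmdef, aux_sumsq, hpcard]
    have h2 := aux_esymm_two p.roots
    push_cast
    linarith
  have hy2 : y = 2*xn1 - xn2 := by linarith
  have hTm : Tm = ((j:ℝ)+2)*((j:ℝ)+1)*(xn1 - xn2)^2 := by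
    rw [hstep, hS]
    rw [hy2] at hE
    linear_combination -hE
  -- bounds
  clear_value L A B
  have hDm0 : 0 ≤ Dm := by
    obtain ⟨ξ, -, hξ⟩ := hDmex
    rw [← hξ]; exact abs_nonneg _
  have hbound : ∀ x ∈ p.roots, (x - xn1)^2 ≤ Dm^2 := by
    intro x hx
    have hxr : p.eval x = 0 := (mem_roots'.mp hx).2
    have h := hDm x hxr
    calc (x - xn1)^2 = |x - xn1|^2 := (sq_abs _).symm
    _ ≤ Dm^2 := by apply pow_le_pow_left₀ (abs_nonneg _) h
  -- Part 1
  have hle1 : Tm ≤ ((j:ℝ)+2) * Dm^2 := by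
    have h := Multiset.sum_map_le_sum_map (fun x => (x - xn1)^2) (fun _ => Dm^2) hbound
    rw [Multiset.map_const', Multiset.sum_replicate, hpcard, nsmul_eq_mul] at h
    rw [hTmdef]
    push_cast at h
    linarith
  have hpos2 : (0:ℝ) < (j:ℝ)+2 := by positivity
  have h1 : ((j:ℝ)+1)*(xn1-xn2)^2 ≤ Dm^2 := by
    have h2 : ((j:ℝ)+2) * (((j:ℝ)+1)*(xn1-xn2)^2) ≤ ((j:ℝ)+2) * Dm^2 := by
      nlinarith only [hTm, hle1, hpos2]
    exact le_of_mul_le_mul_left h2 hpos2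
  have hcastnm : (n:ℝ) - m = (j:ℝ) + 2 := by
    have h1 : ((n - m : ℕ) : ℝ) = (n:ℝ) - m := by
      push_cast [Nat.cast_sub (show m ≤ n by omega)]; ring
    rw [← h1]
    have : n - m = j + 2 := by omega
    rw [this]; push_cast; ring
  constructor
  · have hc' : (n:ℝ) - m - 1 = (j:ℝ) + 1 := by rw [hcastnm]; ring
    rw [hc']
    calc Real.sqrt ((j:ℝ)+1) * |xn1 - xn2|
        = Real.sqrt (((j:ℝ)+1) * (xn1-xn2)^2) := by
          rw [Real.sqrt_mul (by positivity), Real.sqrt_sq_eq_abs]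
    _ ≤ Real.sqrt (Dm^2) := Real.sqrt_le_sqrt h1
    _ = Dm := Real.sqrt_sq hDm0
  · intro hc
    have hc1mem : xn1 ∈ p.roots := by
      rw [mem_roots']
      exact ⟨hp0, hc⟩
    obtain ⟨s, hs⟩ := Multiset.exists_cons_of_mem hc1mem
    have hscard : Multiset.card s = j + 1 := by
      have := hpcard
      rw [hs] at this
      simpa using this
    have hTm2 : Tm = (s.map (fun x => (x - xn1)^2)).sum := by
      rw [hTmdef, hs]
      simp
    have hle2 : Tm ≤ ((j:ℝ)+1) * Dm^2 := by
      have h := Multiset.sum_map_le_sum_map (fun x => (x - xn1)^2) (fun _ => Dm^2)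
        (fun x hx => hbound x (by rw [hs]; exact Multiset.mem_cons_of_mem hx))
      rw [Multiset.map_const', Multiset.sum_replicate, hscard, nsmul_eq_mul] at h
      rw [hTm2]
      push_cast at h
      linarith
    have hpos1 : (0:ℝ) < (j:ℝ)+1 := by positivity
    have h2 : ((j:ℝ)+2)*(xn1-xn2)^2 ≤ Dm^2 := by
      have h3 : ((j:ℝ)+1) * (((j:ℝ)+2)*(xn1-xn2)^2) ≤ ((j:ℝ)+1) * Dm^2 := by
        nlinarith only [hTm, hle2, hpos1]
      exact le_of_mul_le_mul_left h3 hpos1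
    rw [hcastnm]
    calc Real.sqrt ((j:ℝ)+2) * |xn1 - xn2|
        = Real.sqrt (((j:ℝ)+2) * (xn1-xn2)^2) := by
          rw [Real.sqrt_mul (by positivity), Real.sqrt_sq_eq_abs]
    _ ≤ Real.sqrt (Dm^2) := Real.sqrt_le_sqrt h2
    _ = Dm := Real.sqrt_sq hDm0
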